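/- Let p be a prime, n a positive integer, and t an integer with 2 ≤ t ≤ n. Let (A,T) be a tiling pair of G = ℤ_p × ℤ_{p^n} with |A| = p^t, and set I = {i ∈ {0,1,…,n−1} : (0, p^i) ∈ Z_A}. Then t − 1 ≤ |I| ≤ t. -/

import Mathlib

open Complex Pointwise

/-- The inner product on `ℤ_p × ℤ_{p^n}`: `⟨u,v⟩ = p^(n-1)·u₁·v₁ + u₂·v₂` in `ℤ_{p^n}`. -/
def inn (p n : ℕ) (u v : ZMod p × ZMod (p ^ n)) : ZMod (p ^ n) :=
  (p : ZMod (p ^ n)) ^ (n - 1) * (u.1.val : ZMod (p ^ n)) * (v.1.val : ZMod (p ^ n)) +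
    u.2 * v.2

/-- The character `χ_g(h) = e^(2πi⟨g,h⟩/p^n)`. -/
noncomputable def chi (p n : ℕ) (g h : ZMod p × ZMod (p ^ n)) : ℂ :=
  Complex.exp (2 * Real.pi * Complex.I * ((inn p n g h).val : ℂ) / ((p : ℂ) ^ n))

/-- `χ_g(A) = Σ_{a ∈ A} χ_g(a)`. -/
noncomputable def chiSum (p n : ℕ) (g : ZMod p × ZMod (p ^ n))
    (A : Finset (ZMod p × ZMod (p ^ n))) : ℂ :=
  ∑ a ∈ A, chi p n g a

/-- The zero set `Z_A = {g : χ_g(A) = 0}`. -/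
def zeroSet (p n : ℕ) (A : Finset (ZMod p × ZMod (p ^ n))) :
    Set (ZMod p × ZMod (p ^ n)) :=
  {g | chiSum p n g A = 0}

/-- `(A,B)` is a spectral pair: `|A| = |B|` and `χ_{b-b'}(A) = 0` for distinct `b,b' ∈ B`. -/
def SpectralPair (p n : ℕ) (A B : Finset (ZMod p × ZMod (p ^ n))) : Prop :=
  A.card = B.card ∧ ∀ b ∈ B, ∀ b' ∈ B, b ≠ b' → chiSum p n (b - b') A = 0

/-- `A` is a spectral set: some `B` makes `(A,B)` a spectral pair. -/
def SpectralSet (p n : ℕ) (A : Finset (ZMod p × ZMod (p ^ n))) : Prop :=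
  ∃ B : Finset (ZMod p × ZMod (p ^ n)), SpectralPair p n A B

/-- `(A,T)` is a tiling pair: every `g` has a unique representation `g = a + t`, `a ∈ A`, `t ∈ T`. -/
def TilingPair (p n : ℕ) (A T : Finset (ZMod p × ZMod (p ^ n))) : Prop :=
  ∀ g : ZMod p × ZMod (p ^ n),
    ∃! x : (ZMod p × ZMod (p ^ n)) × (ZMod p × ZMod (p ^ n)),
      x.1 ∈ A ∧ x.2 ∈ T ∧ g = x.1 + x.2

/-- `A` tiles `ℤ_p × ℤ_{p^n}` by translation. -/
def Tiles (p n : ℕ) (A : Finset (ZMod p × ZMod (p ^ n))) : Prop :=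
  ∃ T : Finset (ZMod p × ZMod (p ^ n)), TilingPair p n A T

-- auxiliary development
noncomputable def zet (p n : ℕ) : ℂ := Complex.exp (2 * Real.pi * Complex.I / ((p:ℂ)^n))

lemma zet_prim {p n : ℕ} (hp : p.Prime) : IsPrimitiveRoot (zet p n) (p^n) := by
  have := Complex.isPrimitiveRoot_exp (p^n) (pow_ne_zero _ hp.pos.ne')
  simpa [zet, Nat.cast_pow] using this

lemma zet_pow_mod {p n : ℕ} (hp : p.Prime) (m : ℕ) : zet p n ^ (m % p^n) = zet p n ^ m := by
  conv_rhs => rw [← Nat.div_add_mod m (p^n)]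
  rw [pow_add, pow_mul, (zet_prim hp).pow_eq_one, one_pow, one_mul]

lemma chi_eq {p n : ℕ} (g h : ZMod p × ZMod (p ^ n)) :
    chi p n g h = zet p n ^ (inn p n g h).val := by
  rw [chi, zet, ← Complex.exp_nat_mul]
  congr 1
  ring

lemma pcast_pow_n {p n : ℕ} : ((p : ZMod (p^n)))^n = 0 := by
  rw [← Nat.cast_pow]; exact ZMod.natCast_self _

lemma key_val {p n : ℕ} (hp : p.Prime) (hn : 1 ≤ n) (x y : ZMod p) :
    ((p : ZMod (p^n)))^(n-1) * (((x+y).val : ℕ) : ZMod (p^n))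
      = (p : ZMod (p^n))^(n-1) * ((x.val + y.val : ℕ) : ZMod (p^n)) := by
  haveI : NeZero p := ⟨hp.pos.ne'⟩
  set k := x.val + y.val with hk
  rw [ZMod.val_add]
  have h1 : ((k % p : ℕ) : ZMod (p^n))
      = (k : ZMod (p^n)) - (p : ZMod (p^n)) * ((k / p : ℕ) : ZMod (p^n)) := by
    have h2 : ((k % p + p * (k/p) : ℕ) : ZMod (p^n)) = (k : ZMod (p^n)) := by
      rw [Nat.mod_add_div]
    push_cast at h2
    linear_combination h2
  rw [h1]
  have h3 : (p : ZMod (p^n))^(n-1) * (p : ZMod (p^n)) = 0 := by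
    have h4 : (p : ZMod (p^n))^(n-1) * (p : ZMod (p^n)) = (p : ZMod (p^n))^n := by
      rw [← pow_succ]; congr 1; omega
    rw [h4, pcast_pow_n]
  linear_combination (-((k / p : ℕ) : ZMod (p^n))) * h3

lemma inn_add_right {p n : ℕ} (hp : p.Prime) (hn : 1 ≤ n) (g a b : ZMod p × ZMod (p ^ n)) :
    inn p n g (a+b) = inn p n g a + inn p n g b := by
  have h := key_val (n := n) hp hn a.1 b.1
  simp only [inn, Prod.fst_add, Prod.snd_add]
  push_cast at h ⊢
  linear_combination (g.1.val : ZMod (p^n)) * h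

lemma chi_mul {p n : ℕ} (hp : p.Prime) (hn : 1 ≤ n) (g a b : ZMod p × ZMod (p ^ n)) :
    chi p n g (a+b) = chi p n g a * chi p n g b := by
  haveI : NeZero (p^n) := ⟨pow_ne_zero _ hp.pos.ne'⟩
  rw [chi_eq, chi_eq, chi_eq, ← pow_add, inn_add_right hp hn,
      ZMod.val_add, zet_pow_mod hp]

lemma chi_eq_one_iff {p n : ℕ} (hp : p.Prime) (g h : ZMod p × ZMod (p ^ n)) :
    chi p n g h = 1 ↔ inn p n g h = 0 := by
  haveI : NeZero (p^n) := ⟨pow_ne_zero _ hp.pos.ne'⟩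
  rw [chi_eq]
  constructor
  · intro H
    have hd : p^n ∣ (inn p n g h).val := ((zet_prim hp).pow_eq_one_iff_dvd _).mp H
    have hv := ZMod.val_lt (inn p n g h)
    have : (inn p n g h).val = 0 := Nat.eq_zero_of_dvd_of_lt hd hv
    rw [← ZMod.val_eq_zero]; exact this
  · intro H; rw [H]; simp

lemma sum_chi {p n : ℕ} [NeZero p] [NeZero (p^n)] (hp : p.Prime) (hn : 1 ≤ n)
    (g : ZMod p × ZMod (p ^ n))
    (hg : g ≠ 0) : ∑ h : ZMod p × ZMod (p ^ n), chi p n g h = 0 := by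
  -- find h₀ with chi g h₀ ≠ 1
  obtain ⟨h₀, hne⟩ : ∃ h₀, chi p n g h₀ ≠ 1 := by
    by_cases h2 : g.2 ≠ 0
    · refine ⟨((0 : ZMod p), (1 : ZMod (p^n))), ?_⟩
      rw [Ne, chi_eq_one_iff hp]
      simpa [inn] using h2
    · push_neg at h2
      have h1 : g.1 ≠ 0 := by
        intro h1; apply hg; ext
        · exact h1
        · exact h2
      refine ⟨((1 : ZMod p), (0 : ZMod (p^n))), ?_⟩
      rw [Ne, chi_eq_one_iff hp]
      have hval1 : (1 : ZMod p).val = 1 := ZMod.val_one_eq_one_mod p ▸ Nat.mod_eq_of_lt hp.one_lt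
      simp only [inn, hval1, Nat.cast_one, mul_one, h2, mul_zero, add_zero]
      intro hzero
      have : ((p^(n-1) * g.1.val : ℕ) : ZMod (p^n)) = 0 := by push_cast; linear_combination hzero
      rw [ZMod.natCast_eq_zero_iff] at this
      have hv1 : 0 < g.1.val := Nat.pos_of_ne_zero (fun h => h1 (by rwa [← ZMod.val_eq_zero]))
      have hv2 : g.1.val < p := ZMod.val_lt g.1
      have hdd : p^(n-1) * p ∣ p^(n-1) * g.1.val := by
        rw [← pow_succ]
        have : (n - 1) + 1 = n := by omega
        rwa [this]
      have := (Nat.mul_dvd_mul_iff_left (pow_pos hp.pos (n-1))).mp hdd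
      have := Nat.le_of_dvd hv1 this
      omega
  have key : chi p n g h₀ * ∑ h, chi p n g h = ∑ h, chi p n g h := by
    rw [Finset.mul_sum]
    exact Fintype.sum_equiv (Equiv.addLeft h₀) _ _
      (fun h => by rw [Equiv.coe_addLeft, chi_mul hp hn])
  have : (chi p n g h₀ - 1) * ∑ h, chi p n g h = 0 := by
    rw [sub_mul, one_mul, key, sub_self]
  rcases mul_eq_zero.mp this with h | h
  · exact absurd (by linear_combination h) hne
  · exact h

noncomputable def maskPoly (p n : ℕ) (A : Finset (ZMod p × ZMod (p ^ n))) : Polynomial ℤ :=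
  ∑ a ∈ A, Polynomial.X ^ (a.2.val)

lemma maskPoly_eval_one {p n : ℕ} (A : Finset (ZMod p × ZMod (p ^ n))) :
    (maskPoly p n A).eval 1 = A.card := by
  simp [maskPoly, Polynomial.eval_finset_sum]

lemma aeval_maskPoly {p n : ℕ} [NeZero (p^n)] (hp : p.Prime) (A : Finset (ZMod p × ZMod (p ^ n)))
    (i : ℕ) :
    Polynomial.aeval ((zet p n)^(p^i)) (maskPoly p n A)
      = chiSum p n ((0 : ZMod p), (p : ZMod (p ^ n))^i) A := by
  rw [maskPoly, map_sum, chiSum]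
  refine Finset.sum_congr rfl fun a _ => ?_
  rw [map_pow, Polynomial.aeval_X, chi_eq, ← pow_mul]
  have h1 : inn p n ((0 : ZMod p), (p : ZMod (p ^ n))^i) a
      = ((p^i * a.2.val : ℕ) : ZMod (p^n)) := by
    simp only [inn, ZMod.val_zero, Nat.cast_zero, mul_zero, zero_mul, zero_add]
    push_cast
    rw [ZMod.natCast_val, ZMod.cast_id]
  rw [h1, ZMod.val_natCast, zet_pow_mod hp]

lemma cyclotomic_dvd_maskPoly {p n : ℕ} [NeZero (p^n)] (hp : p.Prime) (hn : 1 ≤ n)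
    (A : Finset (ZMod p × ZMod (p ^ n))) (i : ℕ) (hi : i < n)
    (h0 : chiSum p n ((0 : ZMod p), (p : ZMod (p ^ n))^i) A = 0) :
    Polynomial.cyclotomic (p^(n-i)) ℤ ∣ maskPoly p n A := by
  have hprim : IsPrimitiveRoot ((zet p n)^(p^i)) (p^(n-i)) :=
    IsPrimitiveRoot.pow (pow_pos hp.pos n) (zet_prim hp)
      (by rw [← pow_add]; congr 1; omega)
  have hpos : 0 < p^(n-i) := pow_pos hp.pos _
  rw [Polynomial.cyclotomic_eq_minpoly hprim hpos]
  exact minpoly.isIntegrallyClosed_dvd (hprim.isIntegral hpos)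
    (by rw [aeval_maskPoly hp]; exact h0)

lemma pow_card_dvd {p n : ℕ} (hp : p.Prime) (hn : 1 ≤ n)
    (S : Finset (ZMod p × ZMod (p ^ n))) (J : Finset ℕ)
    (hJ : ∀ i ∈ J, i < n ∧ chiSum p n ((0 : ZMod p), (p : ZMod (p ^ n))^i) S = 0) :
    p ^ J.card ∣ S.card := by
  haveI : NeZero (p^n) := ⟨pow_ne_zero _ hp.pos.ne'⟩
  haveI := Fact.mk hp
  have hdvdQ : ∀ i ∈ J, Polynomial.cyclotomic (p^(n-i)) ℚ
      ∣ (maskPoly p n S).map (Int.castRingHom ℚ) := by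
    intro i hi
    rw [← Polynomial.map_cyclotomic_int]
    exact Polynomial.map_dvd _ (cyclotomic_dvd_maskPoly hp hn S i (hJ i hi).1 (hJ i hi).2)
  have hcop : (J : Set ℕ).Pairwise
      ((Function.onFun IsCoprime fun i => Polynomial.cyclotomic (p^(n-i)) ℚ)) := by
    intro i hi j hj hij
    apply Polynomial.cyclotomic.isCoprime_rat
    intro hEq
    have hiN := (hJ i hi).1
    have hjN := (hJ j hj).1
    have := Nat.pow_right_injective hp.two_le hEq
    omega
  have hprod : (∏ i ∈ J, Polynomial.cyclotomic (p^(n-i)) ℚ)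
      ∣ (maskPoly p n S).map (Int.castRingHom ℚ) :=
    Finset.prod_dvd_of_coprime hcop hdvdQ
  have hmap : (∏ i ∈ J, Polynomial.cyclotomic (p^(n-i)) ℤ).map (Int.castRingHom ℚ)
      = ∏ i ∈ J, Polynomial.cyclotomic (p^(n-i)) ℚ := by
    rw [Polynomial.map_prod]
    exact Finset.prod_congr rfl fun i _ => Polynomial.map_cyclotomic_int _ ℚ
  rw [← hmap] at hprod
  have hmonic : (∏ i ∈ J, Polynomial.cyclotomic (p^(n-i)) ℤ).Monic :=
    Polynomial.monic_prod_of_monic _ _ fun i _ => Polynomial.cyclotomic.monic _ _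
  have hdvdZ : (∏ i ∈ J, Polynomial.cyclotomic (p^(n-i)) ℤ) ∣ maskPoly p n S :=
    (Polynomial.map_dvd_map _ Int.cast_injective hmonic).mp hprod
  have heval := Polynomial.eval_dvd (x := (1 : ℤ)) hdvdZ
  rw [Polynomial.eval_prod, maskPoly_eval_one] at heval
  have hconst : ∀ i ∈ J, Polynomial.eval (1 : ℤ) (Polynomial.cyclotomic (p^(n-i)) ℤ) = p := by
    intro i hi
    have h5 : n - i = (n - i - 1) + 1 := by have := (hJ i hi).1; omega
    rw [h5, Polynomial.eval_one_cyclotomic_prime_pow]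
  rw [Finset.prod_congr rfl hconst, Finset.prod_const] at heval
  exact_mod_cast heval


section tiling
variable {p n : ℕ} {A T : Finset (ZMod p × ZMod (p ^ n))}

lemma tiling_inj (hAT : TilingPair p n A T) :
    ∀ x ∈ A ×ˢ T, ∀ y ∈ A ×ˢ T, x.1 + x.2 = y.1 + y.2 → x = y := by
  intro x hx y hy hxy
  rw [Finset.mem_product] at hx hy
  obtain ⟨u, hu, huniq⟩ := hAT (x.1 + x.2)
  have h1 := huniq x ⟨hx.1, hx.2, rfl⟩
  have h2 := huniq y ⟨hy.1, hy.2, hxy⟩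
  rw [h1, h2]

lemma tiling_card [NeZero p] [NeZero (p^n)] (hp : p.Prime)
    (hAT : TilingPair p n A T) : A.card * T.card = p ^ (n + 1) := by
  have hbij : (A ×ˢ T).card = (Finset.univ : Finset (ZMod p × ZMod (p ^ n))).card := by
    apply Finset.card_bij (fun x _ => x.1 + x.2)
    · intros; exact Finset.mem_univ _
    · intro x hx y hy hxy; exact tiling_inj hAT x hx y hy hxy
    · intro g _
      obtain ⟨u, ⟨hu1, hu2, hg⟩, _⟩ := hAT g
      exact ⟨u, Finset.mem_product.mpr ⟨hu1, hu2⟩, hg.symm⟩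
  rw [Finset.card_product] at hbij
  rw [hbij, Finset.card_univ, Fintype.card_prod, ZMod.card, ZMod.card, pow_succ']

lemma tiling_chiSum_mul [NeZero p] [NeZero (p^n)] (hp : p.Prime) (hn : 1 ≤ n)
    (hAT : TilingPair p n A T) (g : ZMod p × ZMod (p ^ n)) (hg : g ≠ 0) :
    chiSum p n g A * chiSum p n g T = 0 := by
  have h1 : chiSum p n g A * chiSum p n g T = ∑ x ∈ A ×ˢ T, chi p n g (x.1 + x.2) := by
    rw [chiSum, chiSum, Finset.sum_mul_sum, ← Finset.sum_product']
    exact Finset.sum_congr rfl fun x _ => (chi_mul hp hn g x.1 x.2).symm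
  have h2 : ∑ x ∈ A ×ˢ T, chi p n g (x.1 + x.2)
      = ∑ h : ZMod p × ZMod (p ^ n), chi p n g h := by
    apply Finset.sum_bij (fun x _ => x.1 + x.2)
    · intros; exact Finset.mem_univ _
    · intro x hx y hy hxy; exact tiling_inj hAT x hx y hy hxy
    · intro b _
      obtain ⟨u, ⟨hu1, hu2, hg'⟩, _⟩ := hAT b
      exact ⟨u, Finset.mem_product.mpr ⟨hu1, hu2⟩, hg'.symm⟩
    · intros; rfl
  rw [h1, h2, sum_chi hp hn g hg]

end tiling


/-- For a tiling pair `(A,T)` with `|A| = p^t`, the set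
`I = {i < n : (0, p^i) ∈ Z_A}` satisfies `t - 1 ≤ |I| ≤ t`. -/
theorem card_zeroSet_indices_of_tilingPair (p n t : ℕ) (hp : p.Prime) (hn : 1 ≤ n)
    (ht2 : 2 ≤ t) (htn : t ≤ n)
    (A T : Finset (ZMod p × ZMod (p ^ n))) (hAT : TilingPair p n A T)
    (hcard : A.card = p ^ t) :
    t - 1 ≤ {i : ℕ | i < n ∧
        ((0 : ZMod p), (p : ZMod (p ^ n)) ^ i) ∈ zeroSet p n A}.ncard ∧
      {i : ℕ | i < n ∧
        ((0 : ZMod p), (p : ZMod (p ^ n)) ^ i) ∈ zeroSet p n A}.ncard ≤ t := by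
  classical
  haveI : NeZero p := ⟨hp.pos.ne'⟩
  haveI : NeZero (p^n) := ⟨pow_ne_zero _ hp.pos.ne'⟩
  set IA := (Finset.range n).filter
    (fun i => chiSum p n ((0 : ZMod p), (p : ZMod (p^n))^i) A = 0) with hIA
  have hset : {i : ℕ | i < n ∧
      ((0 : ZMod p), (p : ZMod (p ^ n)) ^ i) ∈ zeroSet p n A} = ↑IA := by
    ext i
    simp [hIA, zeroSet, Set.mem_setOf_eq]
  rw [hset, Set.ncard_coe_finset]
  have hup : IA.card ≤ t := by
    have hdvd := pow_card_dvd hp hn A IA (fun i hi => by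
      rw [hIA, Finset.mem_filter, Finset.mem_range] at hi; exact hi)
    rw [hcard] at hdvd
    exact (Nat.pow_dvd_pow_iff_le_right hp.one_lt).mp hdvd
  refine ⟨?_, hup⟩
  set IT := (Finset.range n).filter
    (fun i => chiSum p n ((0 : ZMod p), (p : ZMod (p^n))^i) T = 0) with hIT
  have hTcard : T.card = p ^ (n + 1 - t) := by
    have h1 := tiling_card hp hAT
    rw [hcard] at h1
    have h2 : p ^ t * p ^ (n+1-t) = p ^ (n+1) := by rw [← pow_add]; congr 1; omega
    exact Nat.eq_of_mul_eq_mul_left (pow_pos hp.pos t) (by rw [h1, h2])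
  have hTup : IT.card ≤ n + 1 - t := by
    have hdvd := pow_card_dvd hp hn T IT (fun i hi => by
      rw [hIT, Finset.mem_filter, Finset.mem_range] at hi; exact hi)
    rw [hTcard] at hdvd
    exact (Nat.pow_dvd_pow_iff_le_right hp.one_lt).mp hdvd
  have hsub : Finset.range n \ IA ⊆ IT := by
    intro i hi
    rw [Finset.mem_sdiff, hIA, Finset.mem_filter] at hi
    obtain ⟨hir, hnotz⟩ := hi
    have hAnz : chiSum p n ((0 : ZMod p), (p : ZMod (p^n))^i) A ≠ 0 :=
      fun h => hnotz ⟨hir, h⟩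
    have hiN := Finset.mem_range.mp hir
    have hgne : ((0 : ZMod p), (p : ZMod (p^n))^i) ≠ (0 : ZMod p × ZMod (p^n)) := by
      intro hEq
      have h2 : ((p : ZMod (p^n)))^i = 0 := congrArg Prod.snd hEq
      have h3 : ((p^i : ℕ) : ZMod (p^n)) = 0 := by push_cast; exact h2
      rw [ZMod.natCast_eq_zero_iff] at h3
      exact absurd ((Nat.pow_dvd_pow_iff_le_right hp.one_lt).mp h3) (by omega)
    have hmul := tiling_chiSum_mul hp hn hAT _ hgne
    rcases mul_eq_zero.mp hmul with h | h
    · exact absurd h hAnz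
    · rw [hIT, Finset.mem_filter]; exact ⟨hir, h⟩
  have hcardsub : n - IA.card ≤ IT.card := by
    have h1 : IA ⊆ Finset.range n := by rw [hIA]; exact Finset.filter_subset _ _
    have h2 := Finset.card_le_card hsub
    rw [Finset.card_sdiff_of_subset h1, Finset.card_range] at h2
    exact h2
  omega
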